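/- For every integer n ≥ 2, the normalized sinc integral σ_n = (2/π) ∫₀^∞ (sin t / t)^n dt satisfies 0 < σ_{n+1} < σ_n ≤ 1. -/

import Mathlib

open MeasureTheory Set Real Filter Topology


noncomputable def S (m : ℕ) : ℝ := ∫ t in Set.Ioi (0:ℝ), (Real.sin t / t) ^ m

lemma meas_pow (m : ℕ) : Measurable (fun t : ℝ => (Real.sin t / t) ^ m) :=
  (Real.measurable_sin.div measurable_id).pow_const m

lemma abs_sinc_le_one (t : ℝ) : |Real.sin t / t| ≤ 1 := by
  rcases eq_or_ne t 0 with rfl | ht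
  · simp
  · rw [abs_div, div_le_one (abs_pos.2 ht)]
    exact Real.abs_sin_le_abs

lemma integrableOn_pow {m : ℕ} (hm : 2 ≤ m) :
    IntegrableOn (fun t : ℝ => (Real.sin t / t) ^ m) (Set.Ioi 0) := by
  have h1 : IntegrableOn (fun t : ℝ => (Real.sin t / t) ^ m) (Set.Ioc 0 1) := by
    refine Integrable.mono' (integrable_const 1) ((meas_pow m).aestronglyMeasurable.restrict)
      (ae_of_all _ fun t => ?_)
    rw [Real.norm_eq_abs, abs_pow]
    exact pow_le_one₀ (abs_nonneg _) (abs_sinc_le_one t)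
  have h2 : IntegrableOn (fun t : ℝ => (Real.sin t / t) ^ m) (Set.Ioi 1) := by
    refine Integrable.mono' ((integrableOn_Ioi_rpow_of_lt (by norm_num : (-2:ℝ) < -1) one_pos))
      ((meas_pow m).aestronglyMeasurable.restrict) ?_
    refine (ae_restrict_iff' measurableSet_Ioi).2 (ae_of_all _ fun t ht => ?_)
    have ht1 : (1:ℝ) < t := ht
    have ht0 : (0:ℝ) < t := lt_trans one_pos ht1
    rw [Real.norm_eq_abs, abs_pow]
    have hb : |Real.sin t / t| ≤ 1 / t := by
      rw [abs_div, abs_of_pos ht0, div_le_div_iff_of_pos_right ht0]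
      calc |Real.sin t| ≤ 1 := Real.abs_sin_le_one t
        _ = 1 := rfl
    calc |Real.sin t / t| ^ m ≤ (1/t) ^ m :=
          pow_le_pow_left₀ (abs_nonneg _) hb m
      _ ≤ (1/t) ^ 2 := by
          apply pow_le_pow_of_le_one (by positivity) _ hm
          rw [div_le_one ht0]; exact ht1.le
      _ = t ^ (-2 : ℝ) := by
          rw [show ((-2:ℝ)) = ((-2:ℤ):ℝ) from by norm_num, Real.rpow_intCast]
          rw [one_div, inv_pow, zpow_neg, zpow_two]
          ring_nf
  have := h1.union h2
  rwa [Set.Ioc_union_Ioi_eq_Ioi zero_le_one] at this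

lemma Ioi_eq_iUnion_Ioc :
    Set.Ioi (0:ℝ) = ⋃ k : ℕ, Set.Ioc ((k:ℝ)*π) (((k:ℝ)+1)*π) := by
  ext x
  simp only [Set.mem_Ioi, Set.mem_iUnion, Set.mem_Ioc]
  constructor
  · intro hx
    have hπ := Real.pi_pos
    set c := ⌈x / π⌉₊ with hc
    have hc1 : 1 ≤ c := Nat.one_le_ceil_iff.2 (by positivity)
    refine ⟨c - 1, ?_, ?_⟩
    · have h2 : (c:ℝ) < x / π + 1 := Nat.ceil_lt_add_one (by positivity)
      have hcast : ((c-1:ℕ):ℝ) = (c:ℝ) - 1 := by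
        push_cast [hc1]; ring
      rw [hcast]
      have : (c:ℝ) - 1 < x / π := by linarith
      calc ((c:ℝ)-1) * π < (x/π) * π := by
            exact mul_lt_mul_of_pos_right this hπ
        _ = x := by field_simp
    · have h3 : x / π ≤ (c:ℝ) := Nat.le_ceil _
      have hcast : ((c-1:ℕ):ℝ) + 1 = (c:ℝ) := by push_cast [hc1]; ring
      rw [hcast]
      calc x = (x/π) * π := by field_simp
        _ ≤ (c:ℝ) * π := mul_le_mul_of_nonneg_right h3 hπ.le
  · rintro ⟨k, hk1, -⟩
    have : (0:ℝ) ≤ (k:ℝ) * π := by positivity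
    linarith

lemma pairwise_disjoint_Ioc_pi :
    Pairwise (Function.onFun Disjoint (fun k : ℕ => Set.Ioc ((k:ℝ)*π) (((k:ℝ)+1)*π))) := by
  have hπ := Real.pi_pos
  intro k l hkl
  rcases lt_or_gt_of_ne hkl with h | h
  · apply Set.Ioc_disjoint_Ioc.2
    have : ((k:ℝ)+1) ≤ (l:ℝ) := by exact_mod_cast h
    calc min (((k:ℝ)+1)*π) (((l:ℝ)+1)*π) ≤ ((k:ℝ)+1)*π := min_le_left _ _
      _ ≤ (l:ℝ)*π := mul_le_mul_of_nonneg_right this hπ.le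
      _ ≤ max ((k:ℝ)*π) ((l:ℝ)*π) := le_max_right _ _
  · apply Set.Ioc_disjoint_Ioc.2
    have : ((l:ℝ)+1) ≤ (k:ℝ) := by exact_mod_cast h
    calc min (((k:ℝ)+1)*π) (((l:ℝ)+1)*π) ≤ ((l:ℝ)+1)*π := min_le_right _ _
      _ ≤ (k:ℝ)*π := mul_le_mul_of_nonneg_right this hπ.le
      _ ≤ max ((k:ℝ)*π) ((l:ℝ)*π) := le_max_left _ _

/-- translation: integral of sinc^m over `(kπ, (k+1)π]` -/
lemma interval_transl (m k : ℕ) :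
    ∫ t in Set.Ioc ((k:ℝ)*π) (((k:ℝ)+1)*π), (Real.sin t / t) ^ m
      = ∫ s in Set.Ioc (0:ℝ) π, (-1:ℝ)^(k*m) * (Real.sin s / (s + k*π)) ^ m := by
  have hπ := Real.pi_pos
  have h1 : (k:ℝ)*π ≤ ((k:ℝ)+1)*π := by nlinarith
  rw [← intervalIntegral.integral_of_le h1, ← intervalIntegral.integral_of_le hπ.le]
  have h2 : ∫ s in (0:ℝ)..π, (-1:ℝ)^(k*m) * (Real.sin s / (s + k*π)) ^ m
      = ∫ s in (0:ℝ)..π, (fun t => (Real.sin t / t)^m) (s + k*π) := by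
    apply intervalIntegral.integral_congr
    intro s _
    simp only
    rw [pow_mul, ← mul_pow]
    congr 1
    rw [Real.sin_add_nat_mul_pi]
    ring
  rw [h2, intervalIntegral.integral_comp_add_right (fun t => (Real.sin t / t)^m) ((k:ℝ)*π)]
  congr 1 <;> ring

-- base integrand
lemma meas_base (m k : ℕ) : Measurable (fun s : ℝ => (Real.sin s / (s + k*π)) ^ m) :=
  (Real.measurable_sin.div (measurable_id.add_const _)).pow_const m

lemma integrableOn_base (m k : ℕ) :
    IntegrableOn (fun s : ℝ => (Real.sin s / (s + k*π)) ^ m) (Set.Ioc 0 π) := by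
  refine Integrable.mono' (integrable_const 1) ((meas_base m k).aestronglyMeasurable.restrict) ?_
  refine (ae_restrict_iff' measurableSet_Ioc).2 (ae_of_all _ fun s hs => ?_)
  have h0 : 0 < s := hs.1
  have hk : (0:ℝ) ≤ (k:ℝ)*π := by positivity
  rw [Real.norm_eq_abs, abs_pow]
  apply pow_le_one₀ (abs_nonneg _)
  have hpos : (0:ℝ) < s + k*π := by linarith
  rw [abs_div, abs_of_pos hpos, div_le_one hpos]
  calc |Real.sin s| ≤ |s| := Real.abs_sin_le_abs
    _ = s := abs_of_pos h0
    _ ≤ s + k*π := by linarith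

/-- workhorse positivity lemma -/
lemma pos_aux {ψ : ℝ → ℝ} (hInt : IntegrableOn ψ (Set.Ioc 0 π))
    (h0 : ∀ s ∈ Set.Ioc (0:ℝ) π, 0 ≤ ψ s) (h1 : ∀ s ∈ Set.Ioo (0:ℝ) π, 0 < ψ s) :
    0 < ∫ s in Set.Ioc (0:ℝ) π, ψ s := by
  have hae : 0 ≤ᵐ[volume.restrict (Set.Ioc (0:ℝ) π)] ψ :=
    (ae_restrict_iff' measurableSet_Ioc).2 (ae_of_all _ h0)
  rw [setIntegral_pos_iff_support_of_nonneg_ae hae hInt]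
  have hsub : Set.Ioo (0:ℝ) π ⊆ Function.support ψ ∩ Set.Ioc 0 π := by
    intro s hs
    exact ⟨ne_of_gt (h1 s hs), hs.1, hs.2.le⟩
  calc (0:ENNReal) < volume (Set.Ioo (0:ℝ) π) := by
        rw [Real.volume_Ioo]
        simp [ENNReal.ofReal_pos, Real.pi_pos]
    _ ≤ _ := measure_mono hsub

lemma integral_nonneg_aux {ψ : ℝ → ℝ} (h0 : ∀ s ∈ Set.Ioc (0:ℝ) π, 0 ≤ ψ s) :
    0 ≤ ∫ s in Set.Ioc (0:ℝ) π, ψ s :=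
  setIntegral_nonneg measurableSet_Ioc h0

/-- cubic defect bound: `s - sin s ≥ s^3/(2π²)` on `(0, π]` -/
lemma sin_le_sub_cube {s : ℝ} (h0 : 0 < s) (h1 : s ≤ π) :
    Real.sin s ≤ s - s^3 / (2*π^2) := by
  have hπ := Real.pi_pos
  have hhalf : Real.sin s = 2 * Real.sin (s/2) * Real.cos (s/2) := by
    rw [← Real.sin_two_mul]; congr 1; ring
  have hc0 : 0 ≤ Real.cos (s/2) := by
    apply Real.cos_nonneg_of_mem_Icc
    constructor <;> [linarith; linarith]
  have hs2 : Real.sin (s/2) ≤ s/2 := Real.sin_le (by linarith)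
  have hcb : Real.cos (s/2) ≤ 1 - 2/π^2 * (s/2)^2 := by
    apply Real.cos_le_one_sub_mul_cos_sq
    rw [abs_of_pos (by linarith)]
    linarith
  calc Real.sin s = 2 * Real.sin (s/2) * Real.cos (s/2) := hhalf
    _ ≤ 2 * (s/2) * Real.cos (s/2) := by
        apply mul_le_mul_of_nonneg_right _ hc0
        linarith
    _ = s * Real.cos (s/2) := by ring
    _ ≤ s * (1 - 2/π^2 * (s/2)^2) := by
        apply mul_le_mul_of_nonneg_left hcb h0.le
    _ = s - s^3 / (2*π^2) := by field_simp

/-- the key inequality, near part (j = 0) -/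
lemma key_zero (n : ℕ) (hn : 3 ≤ n) {s : ℝ} (hs0 : 0 < s) (hsπ : s < π) :
    (s + π + Real.sin s) * s^(n+1) < (s - Real.sin s) * (s+π)^(n+1) := by
  have hπ := Real.pi_pos
  have hsin := sin_le_sub_cube hs0 hsπ.le
  have hsin2 : Real.sin s < s := Real.sin_lt hs0
  have hred : (s + π + Real.sin s) * s^4 < (s - Real.sin s) * (s+π)^4 := by
    have hA3 : 4*π^2*s < (s+π)^3 := by
      nlinarith [mul_pos (mul_pos hπ hπ) (sub_pos.2 hsπ), mul_pos (mul_pos hs0 hs0) hs0,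
        mul_pos (mul_pos hs0 hs0) hπ]
    have h2 : (s + π + Real.sin s) * s^4 < 2*(s+π) * s^4 := by
      nlinarith [mul_pos (show (0:ℝ) < s + π - Real.sin s by linarith) (pow_pos hs0 4)]
    have h3 : 2*(s+π) * s^4 ≤ (s^3/(2*π^2)) * (s+π)^4 := by
      rw [div_mul_eq_mul_div, le_div_iff₀ (by positivity)]
      have hkey := mul_le_mul_of_nonneg_left hA3.le
        (show (0:ℝ) ≤ s^3*(s+π) by positivity)
      nlinarith [hkey]
    have h4 : (s^3/(2*π^2)) * (s+π)^4 ≤ (s - Real.sin s) * (s+π)^4 := by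
      apply mul_le_mul_of_nonneg_right _ (by positivity)
      have h5 : s^3/(2*π^2) ≤ s - Real.sin s := by linarith
      rw [div_le_iff₀ (by positivity)] at h5
      linarith
    linarith
  have e1 : n + 1 = (n - 3) + 4 := by omega
  have hpow : s^(n-3) * ((s + π + Real.sin s) * s^4) < s^(n-3) * ((s - Real.sin s) * (s+π)^4) :=
    mul_lt_mul_of_pos_left hred (pow_pos hs0 _)
  have hmono : s^(n-3) * ((s - Real.sin s) * (s+π)^4) ≤ (s+π)^(n-3) * ((s - Real.sin s) * (s+π)^4) := by
    apply mul_le_mul_of_nonneg_right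
    · exact pow_le_pow_left₀ hs0.le (by linarith) _
    · exact mul_nonneg (by linarith) (by positivity)
  calc (s + π + Real.sin s) * s^(n+1) = s^(n-3) * ((s + π + Real.sin s) * s^4) := by
        rw [e1, pow_add]; ring
    _ < (s+π)^(n-3) * ((s - Real.sin s) * (s+π)^4) := lt_of_lt_of_le hpow hmono
    _ = (s - Real.sin s) * (s+π)^(n+1) := by rw [e1, pow_add]; ring

/-- the key inequality, far part (a ≥ 2π) -/
lemma key_far (n : ℕ) (hn : 3 ≤ n) {a x : ℝ} (ha : 2*π ≤ a) (hx0 : 0 < x) (hx1 : x ≤ 1) :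
    (a + π + x) * a^(n+1) < (a - x) * (a+π)^(n+1) := by
  have hπ := Real.pi_gt_three
  have ha6 : (6:ℝ) < a := by linarith
  have ha0 : (0:ℝ) < a := by linarith
  have hB : (1:ℝ) + (n+1) * (π/a) ≤ (1 + π/a)^(n+1) := by
    have hpa : (0:ℝ) ≤ π/a := by positivity
    have := one_add_mul_le_pow (a := π/a) (by linarith) (n+1)
    convert this using 2
    all_goals push_cast; rfl
  have hBa : a^(n+1) + ((n:ℝ)+1) * π * a^n ≤ (a+π)^(n+1) := by
    have h1 : ((1:ℝ) + π/a)^(n+1) * a^(n+1) = (a+π)^(n+1) := by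
      rw [← mul_pow]
      congr 1
      field_simp
    calc a^(n+1) + ((n:ℝ)+1) * π * a^n
        = ((1:ℝ) + ((n:ℝ)+1) * (π/a)) * a^(n+1) := by
          rw [pow_succ]
          field_simp
      _ ≤ (1 + π/a)^(n+1) * a^(n+1) := by
          apply mul_le_mul_of_nonneg_right hB (by positivity)
      _ = (a+π)^(n+1) := h1
  have hn4 : (4:ℝ) ≤ (n:ℝ)+1 := by exact_mod_cast by omega
  have hapos : (0:ℝ) < a^n := pow_pos ha0 n
  have han1 : a^(n+1) = a^n * a := pow_succ a n
  have hmid : a^(n+1) + 4*π*a^n ≤ (a+π)^(n+1) := by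
    have h4π : 4*π*a^n ≤ ((n:ℝ)+1)*π*a^n := by
      apply mul_le_mul_of_nonneg_right _ hapos.le
      nlinarith
    linarith
  have step1 : (a - 1) * (a^(n+1) + 4*π*a^n) ≤ (a - x) * (a+π)^(n+1) := by
    have hx : a - 1 ≤ a - x := by linarith
    have h1 : (0:ℝ) ≤ a - 1 := by linarith
    calc (a - 1) * (a^(n+1) + 4*π*a^n) ≤ (a - 1) * (a+π)^(n+1) :=
          mul_le_mul_of_nonneg_left hmid h1
      _ ≤ (a - x) * (a+π)^(n+1) :=
          mul_le_mul_of_nonneg_right hx (by positivity)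
  have step2 : (a + π + x) * a^(n+1) < (a - 1) * (a^(n+1) + 4*π*a^n) := by
    have key : a*(a+π+x) < (a-1)*(a+4*π) := by nlinarith
    have := mul_lt_mul_of_pos_left key hapos
    rw [han1]
    nlinarith [this]
  linarith

lemma pos_of_pairs {e : ℕ → ℝ} {T : ℝ} (h : HasSum e T)
    (hpair : ∀ j, 0 < e (2*j) + e (2*j+1)) : 0 < T := by
  have hs := h.summable
  have he : Summable fun j => e (2*j) :=
    hs.comp_injective (i := fun j : ℕ => 2*j) (fun a b hab => by dsimp only at hab; omega)
  have ho : Summable fun j => e (2*j+1) :=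
    hs.comp_injective (i := fun j : ℕ => 2*j+1) (fun a b hab => by dsimp only at hab; omega)
  have hT : T = ∑' j, (e (2*j) + e (2*j+1)) := by
    calc T = ∑' k, e k := h.tsum_eq.symm
      _ = (∑' j, e (2*j)) + (∑' j, e (2*j+1)) := (tsum_even_add_odd he ho).symm
      _ = ∑' j, (e (2*j) + e (2*j+1)) := (Summable.tsum_add he ho).symm
  rw [hT]
  exact Summable.tsum_pos (he.add ho) (fun j => (hpair j).le) 0 (hpair 0)

lemma expr_pos_odd (n : ℕ) {x a : ℝ} (hx0 : 0 < x)
    (hxa : x < a) (hkey : (a + π + x) * a^(n+1) < (a - x) * (a+π)^(n+1)) :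
    0 < ((x/a)^n - (x/a)^(n+1)) - ((x/(a+π))^n + (x/(a+π))^(n+1)) := by
  have hπ := Real.pi_pos
  have ha0 : 0 < a := lt_trans hx0 hxa
  have hb0 : 0 < a + π := by linarith
  have e1 : (x/a)^n - (x/a)^(n+1) = x^n * (a - x) / a^(n+1) := by
    rw [div_pow, div_pow, pow_succ, pow_succ]
    field_simp
  have e2 : (x/(a+π))^n + (x/(a+π))^(n+1) = x^n * ((a+π) + x) / (a+π)^(n+1) := by
    rw [div_pow, div_pow, pow_succ, pow_succ]
    field_simp
  rw [e1, e2, sub_pos, div_lt_div_iff₀ (by positivity) (by positivity)]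
  have h2 := mul_lt_mul_of_pos_left hkey (pow_pos hx0 n)
  nlinarith [h2]



lemma hasSum_S (m : ℕ) (hm : 2 ≤ m) :
    HasSum (fun k : ℕ => ∫ s in Set.Ioc (0:ℝ) π,
      (-1:ℝ)^(k*m) * (Real.sin s / (s + k*π)) ^ m) (S m) := by
  have h := hasSum_integral_iUnion (μ := volume)
      (s := fun k : ℕ => Set.Ioc ((k:ℝ)*π) (((k:ℝ)+1)*π))
      (f := fun t => (Real.sin t / t)^m)
      (fun k => measurableSet_Ioc) pairwise_disjoint_Ioc_pi
      (by rw [← Ioi_eq_iUnion_Ioc]; exact integrableOn_pow hm)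
  rw [← Ioi_eq_iUnion_Ioc] at h
  have heq : (fun k : ℕ => ∫ s in Set.Ioc (0:ℝ) π,
      (-1:ℝ)^(k*m) * (Real.sin s / (s + k*π)) ^ m)
      = fun k : ℕ => ∫ t in Set.Ioc ((k:ℝ)*π) (((k:ℝ)+1)*π), (Real.sin t / t)^m := by
    funext k
    exact (interval_transl m k).symm
  rw [heq]
  exact h

lemma sign_even (j m : ℕ) : (-1:ℝ)^((2*j)*m) = 1 :=
  Even.neg_one_pow ⟨j*m, by ring⟩

lemma phi_pi_zero (m k : ℕ) (hm : m ≠ 0) : (Real.sin π / (π + k*π)) ^ m = 0 := by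
  rw [Real.sin_pi, zero_div, zero_pow hm]

lemma cast_shift (j : ℕ) : ((2*j+1:ℕ):ℝ)*π = ((2*j:ℕ):ℝ)*π + π := by push_cast; ring

lemma S_pos (m : ℕ) (hm : 2 ≤ m) : 0 < S m := by
  apply pos_of_pairs (hasSum_S m hm)
  intro j
  rw [← integral_add ((integrableOn_base m (2*j)).const_mul _)
        ((integrableOn_base m (2*j+1)).const_mul _)]
  have hm0 : m ≠ 0 := by omega
  have key : ∀ s ∈ Set.Ioo (0:ℝ) π,
      0 < (-1:ℝ)^((2*j)*m) * (Real.sin s / (s + (2*j:ℕ)*π)) ^ m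
        + (-1:ℝ)^((2*j+1)*m) * (Real.sin s / (s + (2*j+1:ℕ)*π)) ^ m := by
    intro s hs
    have hπ := Real.pi_pos
    have hx0 : 0 < Real.sin s := Real.sin_pos_of_pos_of_lt_pi hs.1 hs.2
    have hnn : (0:ℝ) ≤ ((2*j:ℕ):ℝ)*π := by positivity
    have hnn' : (0:ℝ) ≤ ((2*j+1:ℕ):ℝ)*π := by positivity
    have ha0 : (0:ℝ) < s + (2*j:ℕ)*π := by linarith [hs.1]
    have hb0 : (0:ℝ) < s + (2*j+1:ℕ)*π := by linarith [hs.1]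
    rw [sign_even]
    rcases Nat.even_or_odd m with he | ho
    · have : (-1:ℝ)^((2*j+1)*m) = 1 := Even.neg_one_pow (he.mul_left _)
      rw [this]
      have p1 : 0 < (Real.sin s / (s + (2*j:ℕ)*π)) ^ m := pow_pos (div_pos hx0 ha0) m
      have p2 : 0 < (Real.sin s / (s + (2*j+1:ℕ)*π)) ^ m := pow_pos (div_pos hx0 hb0) m
      linarith
    · have : (-1:ℝ)^((2*j+1)*m) = -1 := Odd.neg_one_pow (Odd.mul ⟨j, by ring⟩ ho)
      rw [this]
      have hlt : s + (2*j:ℕ)*π < s + (2*j+1:ℕ)*π := by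
        rw [cast_shift]; linarith
      have hdiv : Real.sin s / (s + (2*j+1:ℕ)*π) < Real.sin s / (s + (2*j:ℕ)*π) :=
        div_lt_div_of_pos_left hx0 ha0 hlt
      have := pow_lt_pow_left₀ hdiv (by positivity) hm0
      linarith
  apply pos_aux
  · exact ((integrableOn_base m (2*j)).const_mul _).add
      ((integrableOn_base m (2*j+1)).const_mul _)
  · intro s hs
    rcases eq_or_lt_of_le hs.2 with heq | hlt
    · subst heq
      rw [phi_pi_zero m _ hm0, phi_pi_zero m _ hm0]
      simp
    · exact (key s ⟨hs.1, hlt⟩).le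
  · exact key

lemma S_succ_lt (n : ℕ) (hn : 2 ≤ n) : S (n+1) < S n := by
  rw [← sub_pos]
  have h := (hasSum_S n hn).sub (hasSum_S (n+1) (by omega))
  apply pos_of_pairs h
  intro j
  have I1 := (integrableOn_base n (2*j)).const_mul ((-1:ℝ)^((2*j)*n))
  have I2 := (integrableOn_base (n+1) (2*j)).const_mul ((-1:ℝ)^((2*j)*(n+1)))
  have I3 := (integrableOn_base n (2*j+1)).const_mul ((-1:ℝ)^((2*j+1)*n))
  have I4 := (integrableOn_base (n+1) (2*j+1)).const_mul ((-1:ℝ)^((2*j+1)*(n+1)))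
  have J1 : Integrable (fun s : ℝ => (-1:ℝ)^((2*j)*n) * (Real.sin s / (s + (2*j:ℕ)*π)) ^ n
      - (-1:ℝ)^((2*j)*(n+1)) * (Real.sin s / (s + (2*j:ℕ)*π)) ^ (n+1))
      (volume.restrict (Set.Ioc 0 π)) := I1.sub I2
  have J2 : Integrable (fun s : ℝ => (-1:ℝ)^((2*j+1)*n) * (Real.sin s / (s + (2*j+1:ℕ)*π)) ^ n
      - (-1:ℝ)^((2*j+1)*(n+1)) * (Real.sin s / (s + (2*j+1:ℕ)*π)) ^ (n+1))
      (volume.restrict (Set.Ioc 0 π)) := I3.sub I4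
  rw [← integral_sub I1 I2, ← integral_sub I3 I4, ← integral_add J1 J2]
  have hn0 : n ≠ 0 := by omega
  have hn10 : n + 1 ≠ 0 := by omega
  have key : ∀ s ∈ Set.Ioo (0:ℝ) π,
      0 < ((-1:ℝ)^((2*j)*n) * (Real.sin s / (s + (2*j:ℕ)*π)) ^ n
            - (-1:ℝ)^((2*j)*(n+1)) * (Real.sin s / (s + (2*j:ℕ)*π)) ^ (n+1))
        + ((-1:ℝ)^((2*j+1)*n) * (Real.sin s / (s + (2*j+1:ℕ)*π)) ^ n
            - (-1:ℝ)^((2*j+1)*(n+1)) * (Real.sin s / (s + (2*j+1:ℕ)*π)) ^ (n+1)) := by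
    intro s hs
    have hπ := Real.pi_pos
    have hx0 : 0 < Real.sin s := Real.sin_pos_of_pos_of_lt_pi hs.1 hs.2
    have hnn : (0:ℝ) ≤ ((2*j:ℕ):ℝ)*π := by positivity
    have hnn' : (0:ℝ) ≤ ((2*j+1:ℕ):ℝ)*π := by positivity
    have ha0 : (0:ℝ) < s + (2*j:ℕ)*π := by linarith [hs.1]
    have hb0 : (0:ℝ) < s + (2*j+1:ℕ)*π := by linarith [hs.1]
    have hxa : Real.sin s < s + (2*j:ℕ)*π := by
      have := Real.sin_lt hs.1; linarith
    rw [sign_even, sign_even]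
    rcases Nat.even_or_odd n with he | ho
    · -- n even : all four terms with + sign pattern (1, 1, 1, -1)
      have s3 : (-1:ℝ)^((2*j+1)*n) = 1 := Even.neg_one_pow (he.mul_left _)
      have s4 : (-1:ℝ)^((2*j+1)*(n+1)) = -1 :=
        Odd.neg_one_pow (Odd.mul ⟨j, by ring⟩ (he.add_one))
      rw [s3, s4]
      have hy1 : Real.sin s / (s + (2*j:ℕ)*π) < 1 := by
        rw [div_lt_one ha0]; exact hxa
      have hy0 : 0 < Real.sin s / (s + (2*j:ℕ)*π) := div_pos hx0 ha0
      have p1 : (Real.sin s / (s + (2*j:ℕ)*π)) ^ (n+1)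
          < (Real.sin s / (s + (2*j:ℕ)*π)) ^ n :=
        pow_lt_pow_right_of_lt_one₀ hy0 hy1 (Nat.lt_succ_self n)
      have p2 : 0 < (Real.sin s / (s + (2*j+1:ℕ)*π)) ^ n := pow_pos (div_pos hx0 hb0) n
      have p3 : 0 < (Real.sin s / (s + (2*j+1:ℕ)*π)) ^ (n+1) := pow_pos (div_pos hx0 hb0) _
      linarith
    · -- n odd
      have hn3 : 3 ≤ n := by
        rcases ho with ⟨t, rfl⟩; omega
      have s3 : (-1:ℝ)^((2*j+1)*n) = -1 := Odd.neg_one_pow (Odd.mul ⟨j, by ring⟩ ho)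
      have s4 : (-1:ℝ)^((2*j+1)*(n+1)) = 1 :=
        Even.neg_one_pow (Even.mul_left (by simpa using ho.add_one) _)
      rw [s3, s4]
      have hb : s + ((2*j+1:ℕ):ℝ)*π = (s + ((2*j:ℕ):ℝ)*π) + π := by
        rw [cast_shift]; ring
      rw [hb]
      have hkey : (s + (2*j:ℕ)*π + π + Real.sin s) * (s + (2*j:ℕ)*π)^(n+1)
          < (s + (2*j:ℕ)*π - Real.sin s) * ((s + (2*j:ℕ)*π)+π)^(n+1) := by
        rcases Nat.eq_zero_or_pos j with rfl | hj
        · have h0 : ((2*0:ℕ):ℝ)*π = 0 := by norm_num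
          rw [h0, add_zero]
          exact key_zero n hn3 hs.1 hs.2
        · have h2π : 2*π ≤ s + (2*j:ℕ)*π := by
            have : (2:ℝ) ≤ ((2*j:ℕ):ℝ) := by exact_mod_cast by omega
            nlinarith [hs.1]
          exact key_far n hn3 h2π hx0 (Real.sin_le_one s)
      have := expr_pos_odd n hx0 hxa
        (by convert hkey using 2 <;> ring)
      rw [div_pow, div_pow, div_pow, div_pow] at this ⊢
      linarith [this]
  apply pos_aux
  · exact J1.add J2
  · intro s hs
    rcases eq_or_lt_of_le hs.2 with heq | hlt
    · subst heq
      rw [phi_pi_zero n _ hn0, phi_pi_zero (n+1) _ hn10,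
        phi_pi_zero n _ hn0, phi_pi_zero (n+1) _ hn10]
      simp
    · exact (key s ⟨hs.1, hlt⟩).le
  · exact key

lemma inner_s {t : ℝ} (ht : 0 < t) :
    ∫ s in Set.Ioi (0:ℝ), Real.sin t ^ 2 * (s * Real.exp (-(t*s)))
      = (Real.sin t / t) ^ 2 := by
  rw [integral_const_mul]
  have h1 : (fun s : ℝ => s * Real.exp (-(t*s)))
      = fun s : ℝ => s ^ ((2:ℝ)-1) * Real.exp (-(t*s)) := by
    funext s
    norm_num
  rw [h1, Real.integral_rpow_mul_exp_neg_mul_Ioi two_pos ht, Real.Gamma_two, mul_one]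
  rw [show ((2:ℝ)) = ((2:ℕ):ℝ) by norm_num, Real.rpow_natCast]
  rw [div_pow, div_pow, one_pow]
  field_simp

lemma integrableOn_exp_decay {s : ℝ} (hs : 0 < s) :
    IntegrableOn (fun t : ℝ => Real.sin t ^ 2 * (s * Real.exp (-(t*s)))) (Set.Ioi 0) := by
  refine Integrable.mono' ((exp_neg_integrableOn_Ioi 0 hs).const_mul s)
    (Continuous.aestronglyMeasurable (by fun_prop)).restrict (ae_of_all _ fun t => ?_)
  rw [Real.norm_eq_abs, abs_of_nonneg (by positivity)]
  calc Real.sin t ^ 2 * (s * Real.exp (-(t*s)))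
      ≤ 1 * (s * Real.exp (-(t*s))) := by
        apply mul_le_mul_of_nonneg_right (Real.sin_sq_le_one t) (by positivity)
    _ = s * Real.exp (-s*t) := by rw [one_mul, mul_comm t s, neg_mul]

lemma inner_t {s : ℝ} (hs : 0 < s) :
    ∫ t in Set.Ioi (0:ℝ), Real.sin t ^ 2 * (s * Real.exp (-(t*s)))
      = 2/(s^2+4) := by
  have hs4 : s^2 + 4 ≠ 0 := by positivity
  set G : ℝ → ℝ := fun t => Real.exp (-(t*s)) *
    ((s^2/2 * Real.cos (2*t) - s * Real.sin (2*t))/(s^2+4) - 1/2) with hG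
  have hderiv : ∀ t ∈ Set.Ioi (0:ℝ),
      HasDerivAt G (Real.sin t ^ 2 * (s * Real.exp (-(t*s)))) t := by
    intro t _
    have h1 : HasDerivAt (fun t : ℝ => -(t*s)) (-s) t := by
      exact (((hasDerivAt_id t).mul_const s).neg).congr_deriv (by simp)
    have h2 : HasDerivAt (fun t : ℝ => Real.exp (-(t*s))) (Real.exp (-(t*s)) * (-s)) t := h1.exp
    have h3 : HasDerivAt (fun t : ℝ => 2*t) 2 t := by
      simpa using (hasDerivAt_id t).const_mul 2
    have h4 : HasDerivAt (fun t : ℝ => Real.cos (2*t)) (-Real.sin (2*t) * 2) t :=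
      (Real.hasDerivAt_cos (2*t)).comp t h3
    have h5 : HasDerivAt (fun t : ℝ => Real.sin (2*t)) (Real.cos (2*t) * 2) t :=
      (Real.hasDerivAt_sin (2*t)).comp t h3
    have h6 : HasDerivAt (fun t : ℝ =>
        (s^2/2 * Real.cos (2*t) - s * Real.sin (2*t))/(s^2+4) - 1/2)
        ((s^2/2 * (-Real.sin (2*t) * 2) - s * (Real.cos (2*t) * 2))/(s^2+4)) t :=
      (((h4.const_mul (s^2/2)).sub (h5.const_mul s)).div_const (s^2+4)).sub_const (1/2)
    have h7 := h2.mul h6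
    refine h7.congr_deriv ?_
    rw [Real.sin_sq_eq_half_sub]
    field_simp
    ring
  have hcont : ContinuousWithinAt G (Set.Ici 0) 0 :=
    (Continuous.continuousWithinAt (by fun_prop))
  have htend : Tendsto G atTop (𝓝 0) := by
    have h1 : Tendsto (fun t : ℝ => Real.exp (-(t*s))) atTop (𝓝 0) := by
      have h0 : Tendsto (fun t : ℝ => t*s) atTop atTop :=
        Tendsto.atTop_mul_const hs tendsto_id
      exact Real.tendsto_exp_neg_atTop_nhds_zero.comp h0
    have h2 : IsBoundedUnder (· ≤ ·) atTop (norm ∘ (fun t : ℝ =>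
        (s^2/2 * Real.cos (2*t) - s * Real.sin (2*t))/(s^2+4) - 1/2)) := by
      apply isBoundedUnder_of
      refine ⟨(s^2/2 + s)/(s^2+4) + 1/2, fun t => ?_⟩
      have hX : |s^2/2 * Real.cos (2*t) - s * Real.sin (2*t)| ≤ s^2/2 + s := by
        calc |s^2/2 * Real.cos (2*t) - s * Real.sin (2*t)|
            ≤ |s^2/2 * Real.cos (2*t)| + |s * Real.sin (2*t)| := abs_sub _ _
          _ ≤ s^2/2 * 1 + s * 1 := by
              rw [abs_mul, abs_mul, abs_of_pos hs, abs_of_pos (by positivity : (0:ℝ) < s^2/2)]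
              gcongr
              · exact Real.abs_cos_le_one _
              · exact Real.abs_sin_le_one _
          _ = s^2/2 + s := by ring
      calc ‖(s^2/2 * Real.cos (2*t) - s * Real.sin (2*t))/(s^2+4) - 1/2‖
          ≤ |(s^2/2 * Real.cos (2*t) - s * Real.sin (2*t))/(s^2+4)| + |(1:ℝ)/2| := abs_sub _ _
        _ ≤ (s^2/2 + s)/(s^2+4) + 1/2 := by
            rw [abs_div, abs_of_pos (by positivity : (0:ℝ) < s^2+4)]
            have : |(1:ℝ)/2| = 1/2 := by norm_num
            rw [this]
            gcongr
    rw [hG]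
    simpa using h1.zero_mul_isBoundedUnder_le h2
  have := integral_Ioi_of_hasDerivAt_of_tendsto hcont hderiv (integrableOn_exp_decay hs) htend
  rw [this, hG]
  simp only [zero_mul, neg_zero, Real.exp_zero, mul_zero, Real.cos_zero, Real.sin_zero]
  field_simp
  ring

lemma outer_integral : ∫ s in Set.Ioi (0:ℝ), 2/(s^2+4) = π/2 := by
  have hderiv : ∀ s ∈ Set.Ioi (0:ℝ),
      HasDerivAt (fun s : ℝ => Real.arctan (s/2)) (2/(s^2+4)) s := by
    intro s _
    have h := (Real.hasDerivAt_arctan (s/2)).comp s ((hasDerivAt_id s).div_const 2)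
    refine h.congr_deriv ?_
    field_simp
    ring
  have hcont : ContinuousWithinAt (fun s : ℝ => Real.arctan (s/2)) (Set.Ici 0) 0 :=
    (Continuous.continuousWithinAt (Real.continuous_arctan.comp (continuous_id.div_const 2)))
  have hint : IntegrableOn (fun s : ℝ => 2/(s^2+4)) (Set.Ioi 0) := by
    refine Integrable.mono' ((integrable_inv_one_add_sq.const_mul 2).integrableOn)
      (Continuous.aestronglyMeasurable (continuous_const.div (by continuity)
        (fun s => by positivity))).restrict (ae_of_all _ fun s => ?_)
    rw [Real.norm_eq_abs, abs_of_nonneg (by positivity)]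
    have h1 : (0:ℝ) < 1 + s^2 := by positivity
    calc 2/(s^2+4) ≤ 2/(1+s^2) :=
          div_le_div_of_nonneg_left (by norm_num) h1 (by nlinarith)
      _ = 2 * (1+s^2)⁻¹ := by rw [div_eq_mul_inv]
  have htend : Tendsto (fun s : ℝ => Real.arctan (s/2)) atTop (𝓝 (π/2)) := by
    exact (tendsto_nhds_of_tendsto_nhdsWithin Real.tendsto_arctan_atTop).comp
      (tendsto_id.atTop_div_const two_pos)
  have := integral_Ioi_of_hasDerivAt_of_tendsto hcont hderiv hint htend
  rw [this]
  norm_num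

lemma integrableOn_s_slice {t : ℝ} (ht : 0 < t) :
    IntegrableOn (fun s : ℝ => Real.sin t ^ 2 * (s * Real.exp (-(t*s)))) (Set.Ioi 0) := by
  have hbase : IntegrableOn (fun s : ℝ => s * Real.exp (-(t*s))) (Set.Ioi 0) := by
    refine Integrable.mono' ((exp_neg_integrableOn_Ioi 0 (half_pos ht)).const_mul (2/t))
      (Continuous.aestronglyMeasurable (by fun_prop)).restrict ?_
    refine (ae_restrict_iff' measurableSet_Ioi).2 (ae_of_all _ fun s hs => ?_)
    have hs0 : (0:ℝ) < s := hs
    rw [Real.norm_eq_abs, abs_of_nonneg (by positivity)]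
    have h1 : t*s/2 ≤ Real.exp (t*s/2) := by
      have := Real.add_one_le_exp (t*s/2)
      linarith
    have h2 : s ≤ 2/t * Real.exp (t*s/2) := by
      rw [div_mul_eq_mul_div, le_div_iff₀ ht]
      nlinarith [Real.exp_pos (t*s/2)]
    calc s * Real.exp (-(t*s)) ≤ (2/t * Real.exp (t*s/2)) * Real.exp (-(t*s)) :=
          mul_le_mul_of_nonneg_right h2 (Real.exp_pos _).le
      _ = 2/t * Real.exp (-(t/2)*s) := by
          rw [mul_assoc, ← Real.exp_add]
          congr 2
          ring
  exact hbase.const_mul _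

lemma S_two : S 2 = π/2 := by
  have hmeas : AEStronglyMeasurable
      (Function.uncurry (fun t s : ℝ => Real.sin t ^ 2 * (s * Real.exp (-(t*s)))))
      ((volume.restrict (Set.Ioi (0:ℝ))).prod (volume.restrict (Set.Ioi (0:ℝ)))) := by
    apply Continuous.aestronglyMeasurable
    have : (Function.uncurry (fun t s : ℝ => Real.sin t ^ 2 * (s * Real.exp (-(t*s)))))
        = fun p : ℝ × ℝ => Real.sin p.1 ^ 2 * (p.2 * Real.exp (-(p.1*p.2))) := rfl
    rw [this]
    fun_prop
  have hint : Integrable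
      (Function.uncurry (fun t s : ℝ => Real.sin t ^ 2 * (s * Real.exp (-(t*s)))))
      ((volume.restrict (Set.Ioi (0:ℝ))).prod (volume.restrict (Set.Ioi (0:ℝ)))) := by
    rw [integrable_prod_iff hmeas]
    constructor
    · filter_upwards [ae_restrict_mem measurableSet_Ioi] with t ht
      exact integrableOn_s_slice ht
    · apply Integrable.congr (integrableOn_pow (le_refl 2))
      filter_upwards [ae_restrict_mem measurableSet_Ioi] with t ht
      rw [← inner_s ht]
      apply integral_congr_ae
      filter_upwards [ae_restrict_mem measurableSet_Ioi] with s hs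
      have hs0 : (0:ℝ) < s := hs
      rw [Real.norm_eq_abs]
      simp only [Function.uncurry_apply_pair]
      exact (abs_of_nonneg (mul_nonneg (sq_nonneg _)
        (mul_nonneg hs0.le (Real.exp_pos _).le))).symm
  have hswap := integral_integral_swap hint
  have hL : (∫ t in Set.Ioi (0:ℝ), ∫ s in Set.Ioi (0:ℝ),
      Real.sin t ^ 2 * (s * Real.exp (-(t*s)))) = S 2 := by
    apply integral_congr_ae
    filter_upwards [ae_restrict_mem measurableSet_Ioi] with t ht
    exact inner_s ht
  have hR : (∫ s in Set.Ioi (0:ℝ), ∫ t in Set.Ioi (0:ℝ),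
      Real.sin t ^ 2 * (s * Real.exp (-(t*s)))) = π/2 := by
    rw [← outer_integral]
    apply integral_congr_ae
    filter_upwards [ae_restrict_mem measurableSet_Ioi] with s hs
    exact inner_t hs
  rw [← hL, hswap, hR]

noncomputable def sigma (n : ℕ) : ℝ :=
  (2 / Real.pi) * ∫ t in Set.Ioi (0:ℝ), (Real.sin t / t) ^ n

theorem sigma_strict_anti (n : ℕ) (hn : 2 ≤ n) :
    0 < sigma (n + 1) ∧ sigma (n + 1) < sigma n ∧ sigma n ≤ 1 := by
  have hπ := Real.pi_pos
  have hc : 0 < 2/Real.pi := by positivity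
  refine ⟨mul_pos hc (S_pos (n+1) (by omega)), mul_lt_mul_of_pos_left (S_succ_lt n hn) hc, ?_⟩
  have h2 : ∀ m, 2 ≤ m → S m ≤ π/2 := by
    intro m hm
    induction m, hm using Nat.le_induction with
    | base => rw [S_two]
    | succ m hm ih => exact le_trans (S_succ_lt m hm).le ih
  calc sigma n = 2/Real.pi * S n := rfl
    _ ≤ 2/Real.pi * (π/2) := mul_le_mul_of_nonneg_left (h2 n hn) hc.le
    _ = 1 := by field_simp
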